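/- Let S_n^2 be the n-dimensional split-star network with n ≥ 4. If U is a subset of V(S_n^2) with 2 ≤ |U| ≤ 8n − 22, then |N_{S_n^2}(U)| ≥ 4n − 9. -/

import Mathlib

open SimpleGraph

/-- The neighborhood of a vertex set `U` in `G`: all vertices outside `U`
adjacent to at least one vertex of `U`. -/
def setNbhd {V : Type*} (G : SimpleGraph V) (U : Set V) : Set V :=
  {v | v ∉ U ∧ ∃ u ∈ U, G.Adj u v}

/-- The 3-cycle `(a b c)` (sending `a ↦ b ↦ c ↦ a`) as a permutation. -/
def cycle3 {α : Type*} [DecidableEq α] (a b c : α) : Equiv.Perm α :=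
  Equiv.swap a c * Equiv.swap a b

/-- The `n`-dimensional split-star network `S_n^2`: vertices are all permutations of
`{1,…,n}` (as `Equiv.Perm (Fin n)`, acting on `0`-based positions); `p` and `q` are
adjacent iff `q` is obtained from `p` by a 2-exchange (swapping the entries in the first
two positions) or a 3-rotation (rotating, in either direction, the entries in positions
`0`, `1` and `a` for some `a` with `2 ≤ a`). -/
def splitStar (n : ℕ) : SimpleGraph (Equiv.Perm (Fin n)) :=
  SimpleGraph.fromRel (fun p q => ∃ i j : Fin n, i.val = 0 ∧ j.val = 1 ∧
    (q = p * Equiv.swap i j ∨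
     ∃ a : Fin n, 2 ≤ a.val ∧ (q = p * cycle3 i j a ∨ q = p * cycle3 i a j)))

open Equiv

section cycle3
variable {α : Type*} [DecidableEq α] {a b c d : α}

lemma cycle3_inv (a b c : α) : (cycle3 a b c)⁻¹ = cycle3 a c b := by
  simp [cycle3, mul_inv_rev]

lemma cycle3_fst (h1 : a ≠ b) (h3 : b ≠ c) : cycle3 a b c a = b := by
  simp [cycle3, Equiv.Perm.mul_apply, swap_apply_left, swap_apply_of_ne_of_ne h1.symm h3]

lemma cycle3_snd (h1 : a ≠ b) (h3 : b ≠ c) : cycle3 a b c b = c := by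
  simp [cycle3, Equiv.Perm.mul_apply, swap_apply_right, swap_apply_left]

lemma cycle3_thd (h2 : a ≠ c) (h3 : b ≠ c) : cycle3 a b c c = a := by
  simp [cycle3, Equiv.Perm.mul_apply, swap_apply_of_ne_of_ne h2.symm h3.symm,
    swap_apply_right]

lemma cycle3_other (h1 : d ≠ a) (h2 : d ≠ b) (h3 : d ≠ c) : cycle3 a b c d = d := by
  simp [cycle3, swap_apply_of_ne_of_ne h1 h2, swap_apply_of_ne_of_ne h1 h3]

lemma cycle3_ne_one (h1 : a ≠ b) (h3 : b ≠ c) : cycle3 a b c ≠ 1 := by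
  intro h
  have := cycle3_fst h1 h3
  rw [h] at this
  simp at this
  exact h1 this

end cycle3

section gens

variable {N : ℕ}

/-- position 0 -/
def i0 (hN : 3 ≤ N) : Fin N := ⟨0, by omega⟩
/-- position 1 -/
def i1 (hN : 3 ≤ N) : Fin N := ⟨1, by omega⟩

@[simp] lemma i0_val (hN : 3 ≤ N) : (i0 hN).val = 0 := rfl
@[simp] lemma i1_val (hN : 3 ≤ N) : (i1 hN).val = 1 := rfl

lemma i0_ne_i1 (hN : 3 ≤ N) : i0 hN ≠ i1 hN := by
  intro h; rw [Fin.ext_iff] at h; simp at h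

lemma i0_ne_big {hN : 3 ≤ N} {a : Fin N} (ha : 2 ≤ a.val) : i0 hN ≠ a := by
  intro h; rw [Fin.ext_iff] at h; simp at h; omega

lemma i1_ne_big {hN : 3 ≤ N} {a : Fin N} (ha : 2 ≤ a.val) : i1 hN ≠ a := by
  intro h; rw [Fin.ext_iff] at h; simp at h; omega

/-- generators of the split-star graph -/
def IsGen (hN : 3 ≤ N) (g : Equiv.Perm (Fin N)) : Prop :=
  g = Equiv.swap (i0 hN) (i1 hN) ∨
    ∃ a : Fin N, 2 ≤ a.val ∧
      (g = cycle3 (i0 hN) (i1 hN) a ∨ g = (cycle3 (i0 hN) (i1 hN) a)⁻¹)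

lemma isGen_inv {hN : 3 ≤ N} {g : Equiv.Perm (Fin N)} (h : IsGen hN g) : IsGen hN g⁻¹ := by
  rcases h with h | ⟨a, ha, h | h⟩
  · left; rw [h]; simp
  · exact Or.inr ⟨a, ha, Or.inr (by rw [h])⟩
  · exact Or.inr ⟨a, ha, Or.inl (by rw [h, inv_inv])⟩

lemma isGen_ne_one {hN : 3 ≤ N} {g : Equiv.Perm (Fin N)} (h : IsGen hN g) : g ≠ 1 := by
  have h01 := i0_ne_i1 hN
  rcases h with h | ⟨a, ha, h | h⟩
  · rw [h]
    intro hh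
    have h2 := Equiv.ext_iff.mp hh (i0 hN)
    rw [swap_apply_left, Equiv.Perm.one_apply] at h2
    exact h01 h2.symm
  · rw [h]
    exact cycle3_ne_one h01 (i1_ne_big ha)
  · rw [h, cycle3_inv]
    exact cycle3_ne_one (i0_ne_big ha) (Ne.symm (i1_ne_big ha))

lemma splitStar_adj_iff (hN : 3 ≤ N) {p q : Equiv.Perm (Fin N)} :
    (splitStar N).Adj p q ↔ ∃ g, IsGen hN g ∧ q = p * g := by
  have h01 := i0_ne_i1 hN
  rw [splitStar, fromRel_adj]
  constructor
  · rintro ⟨hne, h | h⟩ <;> rcases h with ⟨i, j, hi, hj, h⟩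
    · have hi' : i = i0 hN := by simp [i0, Fin.ext_iff, hi]
      have hj' : j = i1 hN := by simp [i1, Fin.ext_iff, hj]
      subst hi' hj'
      rcases h with h | ⟨a, ha, h | h⟩
      · exact ⟨_, Or.inl rfl, h⟩
      · exact ⟨_, Or.inr ⟨a, ha, Or.inl rfl⟩, h⟩
      · exact ⟨_, Or.inr ⟨a, ha, Or.inr rfl⟩, by rw [h, cycle3_inv]⟩
    · have hi' : i = i0 hN := by simp [i0, Fin.ext_iff, hi]
      have hj' : j = i1 hN := by simp [i1, Fin.ext_iff, hj]
      subst hi' hj'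
      rcases h with h | ⟨a, ha, h | h⟩
      · refine ⟨_, Or.inl rfl, ?_⟩
        rw [h]; simp [mul_assoc]
      · refine ⟨_, Or.inr ⟨a, ha, Or.inr rfl⟩, ?_⟩
        rw [h]; simp [mul_assoc]
      · refine ⟨_, Or.inr ⟨a, ha, Or.inl rfl⟩, ?_⟩
        have hcc : cycle3 (i0 hN) a (i1 hN) * cycle3 (i0 hN) (i1 hN) a = 1 := by
          rw [← cycle3_inv]; simp
        rw [h, mul_assoc, hcc, mul_one]
  · rintro ⟨g, hg, rfl⟩
    have hne : p ≠ p * g := by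
      intro h
      exact isGen_ne_one hg (by
        have := congrArg (p⁻¹ * ·) h
        simpa [mul_assoc] using this.symm)
    refine ⟨hne, Or.inl ⟨i0 hN, i1 hN, rfl, rfl, ?_⟩⟩
    rcases hg with h | ⟨a, ha, h | h⟩
    · exact Or.inl (by rw [h])
    · exact Or.inr ⟨a, ha, Or.inl (by rw [h])⟩
    · exact Or.inr ⟨a, ha, Or.inr (by rw [h, cycle3_inv])⟩

end gens

section liftup
open Equiv Fin

variable {N : ℕ}

/-- embed a permutation of `Fin N` as a permutation of `Fin (N+1)` whose value
at the last position is `v`. -/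
def liftPerm (v : Fin (N + 1)) (q : Equiv.Perm (Fin N)) : Equiv.Perm (Fin (N + 1)) :=
  (finSuccEquiv' (Fin.last N)).trans (q.optionCongr.trans (finSuccEquiv' v).symm)

lemma liftPerm_castSucc (v : Fin (N + 1)) (q : Equiv.Perm (Fin N)) (j : Fin N) :
    liftPerm v q j.castSucc = v.succAbove (q j) := by
  have h1 : finSuccEquiv' (Fin.last N) j.castSucc = some j := by
    rw [← Fin.succAbove_last, finSuccEquiv'_succAbove]
  simp [liftPerm, h1, finSuccEquiv'_symm_some]

lemma liftPerm_last (v : Fin (N + 1)) (q : Equiv.Perm (Fin N)) :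
    liftPerm v q (Fin.last N) = v := by
  simp [liftPerm, finSuccEquiv'_at, finSuccEquiv'_symm_none]

lemma liftPerm_mul (v : Fin (N + 1)) (q g : Equiv.Perm (Fin N)) :
    liftPerm v q * liftPerm (Fin.last N) g = liftPerm v (q * g) := by
  ext x
  induction x using Fin.lastCases with
  | last => simp [Equiv.Perm.mul_apply, liftPerm_last]
  | cast j =>
      rw [Equiv.Perm.mul_apply, liftPerm_castSucc, Fin.succAbove_last, liftPerm_castSucc,
        liftPerm_castSucc, Equiv.Perm.mul_apply]

lemma liftPerm_injective (v : Fin (N + 1)) : Function.Injective (liftPerm v) := by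
  intro q q' h
  apply Equiv.ext
  intro j
  have := congrArg (fun e => e j.castSucc) h
  simp only [liftPerm_castSucc] at this
  exact Fin.succAbove_right_injective this

lemma liftPerm_last_one : liftPerm (Fin.last N) (1 : Equiv.Perm (Fin N)) = 1 := by
  ext x
  induction x using Fin.lastCases with
  | last => simp [liftPerm_last]
  | cast j => simp [liftPerm_castSucc, Fin.succAbove_last]

lemma liftPerm_last_inv (g : Equiv.Perm (Fin N)) :
    liftPerm (Fin.last N) g⁻¹ = (liftPerm (Fin.last N) g)⁻¹ := by
  have hgg : liftPerm (Fin.last N) g * liftPerm (Fin.last N) g⁻¹ = 1 := by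
    have h1 : g * g⁻¹ = 1 := by simp
    rw [liftPerm_mul, h1, liftPerm_last_one]
  exact eq_inv_of_mul_eq_one_right hgg

lemma exists_liftPerm {v : Fin (N + 1)} {p : Equiv.Perm (Fin (N + 1))}
    (hp : p (Fin.last N) = v) : ∃ q, p = liftPerm v q := by
  set e := ((finSuccEquiv' (Fin.last N)).symm.trans (p.trans (finSuccEquiv' v))) with he
  have hsome : ∀ j : Fin N, ∃ x', e (some j) = some x' := by
    intro j
    have h1 : (finSuccEquiv' (Fin.last N)).symm (some j) = j.castSucc := by
      rw [← Fin.succAbove_last, finSuccEquiv'_symm_some]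
    have h2 : p j.castSucc ≠ v := by
      intro h
      rw [← hp] at h
      have := p.injective h
      exact (Fin.castSucc_lt_last j).ne this
    have h3 : finSuccEquiv' v (p j.castSucc) ≠ none := by
      intro h
      apply h2
      have := (finSuccEquiv' v).injective (h.trans (finSuccEquiv'_at v).symm)
      exact this
    rcases Option.ne_none_iff_exists'.mp h3 with ⟨x', hx'⟩
    exact ⟨x', by simp [he, h1, hx']⟩
  refine ⟨Equiv.removeNone e, ?_⟩
  have key : ∀ j : Fin N, p j.castSucc = v.succAbove (Equiv.removeNone e j) := by
    intro j
    have h1 := Equiv.removeNone_some e (hsome j)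
    have h2 : (finSuccEquiv' (Fin.last N)).symm (some j) = j.castSucc := by
      rw [← Fin.succAbove_last, finSuccEquiv'_symm_some]
    rw [he] at h1
    simp only [Equiv.trans_apply, h2] at h1
    have := congrArg (finSuccEquiv' v).symm h1
    rw [Equiv.symm_apply_apply, finSuccEquiv'_symm_some] at this
    exact this.symm
  ext x
  induction x using Fin.lastCases with
  | last => rw [hp, liftPerm_last]
  | cast j => rw [key j, liftPerm_castSucc]

end liftup

section gentransfer
open Equiv Fin

variable {N : ℕ}

lemma swap_castSucc (x y j : Fin N) :
    Equiv.swap x.castSucc y.castSucc j.castSucc = (Equiv.swap x y j).castSucc := by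
  rcases eq_or_ne j x with rfl | hx
  · rw [swap_apply_left, swap_apply_left]
  · rcases eq_or_ne j y with rfl | hy
    · rw [swap_apply_right, swap_apply_right]
    · rw [swap_apply_of_ne_of_ne (fun h => hx (Fin.castSucc_injective N h))
        (fun h => hy (Fin.castSucc_injective N h)), swap_apply_of_ne_of_ne hx hy]

lemma swap_castSucc_last (x y : Fin N) :
    Equiv.swap x.castSucc y.castSucc (Fin.last N) = Fin.last N :=
  swap_apply_of_ne_of_ne (Fin.castSucc_lt_last x).ne' (Fin.castSucc_lt_last y).ne'

lemma liftPerm_last_swap (x y : Fin N) :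
    liftPerm (Fin.last N) (Equiv.swap x y) = Equiv.swap x.castSucc y.castSucc := by
  ext w
  induction w using Fin.lastCases with
  | last => rw [liftPerm_last, swap_castSucc_last]
  | cast j => rw [liftPerm_castSucc, Fin.succAbove_last, swap_castSucc]

lemma cycle3_castSucc (x y z j : Fin N) :
    cycle3 x.castSucc y.castSucc z.castSucc j.castSucc = ((cycle3 x y z) j).castSucc := by
  simp only [cycle3, Equiv.Perm.mul_apply, swap_castSucc]

lemma cycle3_castSucc_last (x y z : Fin N) :
    cycle3 x.castSucc y.castSucc z.castSucc (Fin.last N) = Fin.last N := by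
  simp only [cycle3, Equiv.Perm.mul_apply, swap_castSucc_last]

lemma liftPerm_last_cycle3 (x y z : Fin N) :
    liftPerm (Fin.last N) (cycle3 x y z) = cycle3 x.castSucc y.castSucc z.castSucc := by
  apply Equiv.ext
  intro w
  induction w using Fin.lastCases with
  | last => rw [liftPerm_last, cycle3_castSucc_last]
  | cast j => rw [liftPerm_castSucc, Fin.succAbove_last, cycle3_castSucc]

lemma castSucc_i0 (hN : 3 ≤ N) (hN1 : 3 ≤ N + 1) : (i0 hN).castSucc = i0 hN1 := by
  apply Fin.ext; simp [i0]

lemma castSucc_i1 (hN : 3 ≤ N) (hN1 : 3 ≤ N + 1) : (i1 hN).castSucc = i1 hN1 := by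
  apply Fin.ext; simp [i1]

lemma isGen_lift {hN : 3 ≤ N} {hN1 : 3 ≤ N + 1} {g : Equiv.Perm (Fin N)}
    (hg : IsGen hN g) : IsGen hN1 (liftPerm (Fin.last N) g) := by
  rcases hg with h | ⟨a, ha, h | h⟩
  · left
    rw [h, liftPerm_last_swap, castSucc_i0 hN hN1, castSucc_i1 hN hN1]
  · refine Or.inr ⟨a.castSucc, by simpa using ha, Or.inl ?_⟩
    rw [h, liftPerm_last_cycle3, castSucc_i0 hN hN1, castSucc_i1 hN hN1]
  · refine Or.inr ⟨a.castSucc, by simpa using ha, Or.inr ?_⟩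
    rw [h, liftPerm_last_inv, liftPerm_last_cycle3, castSucc_i0 hN hN1, castSucc_i1 hN hN1]

lemma isGen_unlift {hN : 3 ≤ N} {hN1 : 3 ≤ N + 1} {g' : Equiv.Perm (Fin (N + 1))}
    (hg : IsGen hN1 g') (hfix : g' (Fin.last N) = Fin.last N) :
    ∃ g, IsGen hN g ∧ g' = liftPerm (Fin.last N) g := by
  have hlast0 : (Fin.last N) ≠ i0 hN1 := by
    intro h; rw [Fin.ext_iff] at h; simp [Fin.val_last] at h; omega
  have hlast1 : (Fin.last N) ≠ i1 hN1 := by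
    intro h; rw [Fin.ext_iff] at h; simp [Fin.val_last] at h; omega
  rcases hg with h | ⟨a, ha, h | h⟩
  · exact ⟨_, Or.inl rfl, by
      rw [h, liftPerm_last_swap, castSucc_i0 hN hN1, castSucc_i1 hN hN1]⟩
  · have hane : a ≠ Fin.last N := by
      intro rfla
      rw [rfla] at h
      rw [h, cycle3_thd (Ne.symm hlast0) (Ne.symm hlast1)] at hfix
      exact hlast0 hfix.symm
    rcases Fin.exists_castSucc_eq.mpr hane with ⟨b, rfl⟩
    refine ⟨cycle3 (i0 hN) (i1 hN) b, Or.inr ⟨b, by simpa using ha, Or.inl rfl⟩, ?_⟩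
    rw [h, liftPerm_last_cycle3, castSucc_i0 hN hN1, castSucc_i1 hN hN1]
  · rw [h] at hfix
    have hfix' : cycle3 (i0 hN1) (i1 hN1) a (Fin.last N) = Fin.last N := by
      have h2 := congrArg (cycle3 (i0 hN1) (i1 hN1) a) hfix
      rw [Equiv.Perm.coe_inv, Equiv.apply_symm_apply] at h2
      exact h2.symm
    have hane : a ≠ Fin.last N := by
      intro rfla
      rw [rfla, cycle3_thd (Ne.symm hlast0) (Ne.symm hlast1)] at hfix'
      exact hlast0 hfix'.symm
    rcases Fin.exists_castSucc_eq.mpr hane with ⟨b, rfl⟩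
    refine ⟨(cycle3 (i0 hN) (i1 hN) b)⁻¹, Or.inr ⟨b, by simpa using ha, Or.inr rfl⟩, ?_⟩
    rw [h, liftPerm_last_inv, liftPerm_last_cycle3, castSucc_i0 hN hN1, castSucc_i1 hN hN1]

lemma liftPerm_adj (hN : 3 ≤ N) (hN1 : 3 ≤ N + 1) (v : Fin (N + 1))
    (q q' : Equiv.Perm (Fin N)) :
    (splitStar (N + 1)).Adj (liftPerm v q) (liftPerm v q') ↔ (splitStar N).Adj q q' := by
  rw [splitStar_adj_iff hN, splitStar_adj_iff hN1]
  constructor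
  · rintro ⟨g', hg', heq⟩
    have hfix : g' (Fin.last N) = Fin.last N := by
      have h1 : (liftPerm v q) (g' (Fin.last N)) = v := by
        rw [← Equiv.Perm.mul_apply, ← heq, liftPerm_last]
      have h2 : (liftPerm v q) (Fin.last N) = v := liftPerm_last v q
      exact (liftPerm v q).injective (h1.trans h2.symm)
    rcases isGen_unlift (hN := hN) hg' hfix with ⟨g, hg, rfl⟩
    rw [liftPerm_mul] at heq
    exact ⟨g, hg, liftPerm_injective v heq⟩
  · rintro ⟨g, hg, rfl⟩
    exact ⟨liftPerm (Fin.last N) g, isGen_lift (hN1 := hN1) hg, (liftPerm_mul v q g).symm⟩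

end gentransfer

section crossmach
open Equiv Fin

variable {N : ℕ}

/-- the copy of `S_N^2` inside `S_{N+1}^2` consisting of permutations with value `v` last. -/
def copySet (v : Fin (N + 1)) : Set (Equiv.Perm (Fin (N + 1))) := {p | p (Fin.last N) = v}

/-- the cross generator -/
def clg (hN : 3 ≤ N) : Equiv.Perm (Fin (N + 1)) :=
  cycle3 (i0 (by omega : 3 ≤ N + 1)) (i1 (by omega : 3 ≤ N + 1)) (Fin.last N)

lemma last_val_big (hN : 3 ≤ N) : 2 ≤ (Fin.last N).val := by simp [Fin.val_last]; omega

lemma i0_ne_last (hN : 3 ≤ N) : i0 (by omega : 3 ≤ N + 1) ≠ Fin.last N :=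
  i0_ne_big (last_val_big hN)

lemma i1_ne_last (hN : 3 ≤ N) : i1 (by omega : 3 ≤ N + 1) ≠ Fin.last N :=
  i1_ne_big (last_val_big hN)

lemma isGen_clg (hN : 3 ≤ N) : IsGen (by omega : 3 ≤ N + 1) (clg hN) :=
  Or.inr ⟨Fin.last N, last_val_big hN, Or.inl rfl⟩

lemma isGen_clg_inv (hN : 3 ≤ N) : IsGen (by omega : 3 ≤ N + 1) (clg hN)⁻¹ :=
  isGen_inv (isGen_clg hN)

lemma clg_last (hN : 3 ≤ N) : clg hN (Fin.last N) = i0 (by omega : 3 ≤ N + 1) :=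
  cycle3_thd (i0_ne_last hN) (i1_ne_last hN)

lemma clg_inv_last (hN : 3 ≤ N) : (clg hN)⁻¹ (Fin.last N) = i1 (by omega : 3 ≤ N + 1) := by
  rw [clg, cycle3_inv]
  exact cycle3_snd (i0_ne_last hN) (Ne.symm (i1_ne_last hN))

lemma clg_i1 (hN : 3 ≤ N) : clg hN (i1 (by omega : 3 ≤ N + 1)) = Fin.last N :=
  cycle3_snd (i0_ne_i1 _) (i1_ne_last hN)

/-- value at the last position of the first cross neighbour -/
lemma cross1_last (hN : 3 ≤ N) (u : Equiv.Perm (Fin (N + 1))) :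
    (u * clg hN) (Fin.last N) = u (i0 (by omega : 3 ≤ N + 1)) := by
  rw [Equiv.Perm.mul_apply, clg_last]

lemma cross2_last (hN : 3 ≤ N) (u : Equiv.Perm (Fin (N + 1))) :
    (u * (clg hN)⁻¹) (Fin.last N) = u (i1 (by omega : 3 ≤ N + 1)) := by
  rw [Equiv.Perm.mul_apply, clg_inv_last]

lemma cross1_ne_copy (hN : 3 ≤ N) {v : Fin (N + 1)} {u : Equiv.Perm (Fin (N + 1))}
    (hu : u ∈ copySet v) : (u * clg hN) (Fin.last N) ≠ v := by
  rw [cross1_last]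
  intro h
  rw [← hu] at h
  exact i0_ne_last hN (u.injective h)

lemma cross2_ne_copy (hN : 3 ≤ N) {v : Fin (N + 1)} {u : Equiv.Perm (Fin (N + 1))}
    (hu : u ∈ copySet v) : (u * (clg hN)⁻¹) (Fin.last N) ≠ v := by
  rw [cross2_last]
  intro h
  rw [← hu] at h
  exact i1_ne_last hN (u.injective h)

/-- the two cross neighbours of vertices in a common copy are pairwise distinct -/
lemma cross_mixed_ne (hN : 3 ≤ N) {v : Fin (N + 1)} {u u' : Equiv.Perm (Fin (N + 1))}
    (hu : u ∈ copySet v) (hu' : u' ∈ copySet v) : u * clg hN ≠ u' * (clg hN)⁻¹ := by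
  intro h
  have h2 : u' = u * clg hN * clg hN := by
    rw [h]; simp [mul_assoc]
  have h3 : u' (Fin.last N) = u (i1 (by omega : 3 ≤ N + 1)) := by
    rw [h2]
    simp only [Equiv.Perm.mul_apply, clg_last]
    rw [show (clg hN) (i0 (by omega : 3 ≤ N + 1)) = i1 (by omega : 3 ≤ N + 1) from
      cycle3_fst (i0_ne_i1 _) (i1_ne_last hN)]
  rw [hu'] at h3
  rw [← hu] at h3
  exact (i1_ne_last hN) (u.injective h3.symm)

/-- cross neighbours of a set within one copy -/
def crossSet (hN : 3 ≤ N) (T : Set (Equiv.Perm (Fin (N + 1)))) :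
    Set (Equiv.Perm (Fin (N + 1))) :=
  (fun u => u * clg hN) '' T ∪ (fun u => u * (clg hN)⁻¹) '' T

lemma crossSet_ncard (hN : 3 ≤ N) {v : Fin (N + 1)} {T : Set (Equiv.Perm (Fin (N + 1)))}
    (hT : T ⊆ copySet v) : (crossSet hN T).ncard = 2 * T.ncard := by
  have hinj1 : Function.Injective (fun u : Equiv.Perm (Fin (N + 1)) => u * clg hN) :=
    fun a b h => by simpa using congrArg (fun z => z * (clg hN)⁻¹) h
  have hinj2 : Function.Injective (fun u : Equiv.Perm (Fin (N + 1)) => u * (clg hN)⁻¹) :=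
    fun a b h => by simpa using congrArg (fun z => z * clg hN) h
  have hdisj : Disjoint ((fun u => u * clg hN) '' T) ((fun u => u * (clg hN)⁻¹) '' T) := by
    rw [Set.disjoint_left]
    rintro x ⟨u, hu, rfl⟩ ⟨u', hu', hx⟩
    exact cross_mixed_ne hN (hT hu) (hT hu') hx.symm
  rw [crossSet, Set.ncard_union_eq hdisj (Set.toFinite _) (Set.toFinite _),
    Set.ncard_image_of_injective _ hinj1, Set.ncard_image_of_injective _ hinj2]
  omega

lemma crossSet_disjoint_copy (hN : 3 ≤ N) {v : Fin (N + 1)}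
    {T : Set (Equiv.Perm (Fin (N + 1)))} (hT : T ⊆ copySet v) :
    ∀ w ∈ crossSet hN T, w ∉ copySet v := by
  rintro w (⟨u, hu, rfl⟩ | ⟨u, hu, rfl⟩) hw
  · exact cross1_ne_copy hN (hT hu) hw
  · exact cross2_ne_copy hN (hT hu) hw

lemma crossSet_adj (hN : 3 ≤ N) {T : Set (Equiv.Perm (Fin (N + 1)))} :
    ∀ w ∈ crossSet hN T, ∃ u ∈ T, (splitStar (N + 1)).Adj u w := by
  rintro w (⟨u, hu, rfl⟩ | ⟨u, hu, rfl⟩)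
  · exact ⟨u, hu, (splitStar_adj_iff (by omega : 3 ≤ N + 1)).mpr ⟨clg hN, isGen_clg hN, rfl⟩⟩
  · exact ⟨u, hu, (splitStar_adj_iff (by omega : 3 ≤ N + 1)).mpr
      ⟨(clg hN)⁻¹, isGen_clg_inv hN, rfl⟩⟩

end crossmach

section copynbhd
open Equiv Fin

variable {N : ℕ}

/-- within-copy neighbourhood of `U` in the copy `v` -/
def copyNbhd (v : Fin (N + 1)) (U : Set (Equiv.Perm (Fin (N + 1)))) :
    Set (Equiv.Perm (Fin (N + 1))) :=
  {w | w ∈ copySet v ∧ w ∉ U ∧ ∃ u ∈ U ∩ copySet v, (splitStar (N + 1)).Adj u w}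

lemma copyNbhd_subset_setNbhd (v : Fin (N + 1)) (U : Set (Equiv.Perm (Fin (N + 1)))) :
    copyNbhd v U ⊆ setNbhd (splitStar (N + 1)) U := by
  rintro w ⟨_, hw, u, ⟨hu, _⟩, hadj⟩
  exact ⟨hw, u, hu, hadj⟩

lemma copyNbhd_subset_copy (v : Fin (N + 1)) (U : Set (Equiv.Perm (Fin (N + 1)))) :
    copyNbhd v U ⊆ copySet v := fun _ hw => hw.1

lemma range_liftPerm (v : Fin (N + 1)) : Set.range (liftPerm v) = copySet v := by
  ext p
  constructor
  · rintro ⟨q, rfl⟩; exact liftPerm_last v q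
  · intro hp; rcases exists_liftPerm hp with ⟨q, rfl⟩; exact ⟨q, rfl⟩

lemma preimage_ncard (v : Fin (N + 1)) (U : Set (Equiv.Perm (Fin (N + 1)))) :
    ((liftPerm v) ⁻¹' U).ncard = (U ∩ copySet v).ncard := by
  have h1 : liftPerm v '' ((liftPerm v) ⁻¹' U) = U ∩ copySet v := by
    rw [Set.image_preimage_eq_inter_range, range_liftPerm]
  rw [← h1, Set.ncard_image_of_injective _ (liftPerm_injective v)]

lemma copyNbhd_ncard_ge (hN : 3 ≤ N) (v : Fin (N + 1)) (U : Set (Equiv.Perm (Fin (N + 1)))) :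
    (setNbhd (splitStar N) ((liftPerm v) ⁻¹' U)).ncard ≤ (copyNbhd v U).ncard := by
  have hsub : liftPerm v '' (setNbhd (splitStar N) ((liftPerm v) ⁻¹' U)) ⊆ copyNbhd v U := by
    rintro w ⟨w', ⟨hw'1, u', hu', hadj⟩, rfl⟩
    refine ⟨liftPerm_last v w', ?_, liftPerm v u', ⟨hu', liftPerm_last v u'⟩, ?_⟩
    · intro hmem
      exact hw'1 hmem
    · exact (liftPerm_adj hN (by omega) v u' w').mpr hadj
  calc (setNbhd (splitStar N) ((liftPerm v) ⁻¹' U)).ncard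
      = (liftPerm v '' (setNbhd (splitStar N) ((liftPerm v) ⁻¹' U))).ncard :=
        (Set.ncard_image_of_injective _ (liftPerm_injective v)).symm
    _ ≤ (copyNbhd v U).ncard := Set.ncard_le_ncard hsub (Set.toFinite _)

lemma copySet_disjoint {v v' : Fin (N + 1)} (h : v ≠ v') : Disjoint (copySet v) (copySet v') := by
  rw [Set.disjoint_left]
  intro p hp hp'
  exact h (hp.symm.trans hp')

end copynbhd

section counting
variable {α : Type*}

lemma pieces_two {A B S : Set α} (hS : S.Finite) (hA : A ⊆ S) (hB : B ⊆ S)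
    (hAB : Disjoint A B) : A.ncard + B.ncard ≤ S.ncard := by
  rw [← Set.ncard_union_eq hAB (hS.subset hA) (hS.subset hB)]
  exact Set.ncard_le_ncard (Set.union_subset hA hB) hS

lemma pieces_three {A B C S : Set α} (hS : S.Finite) (hA : A ⊆ S) (hB : B ⊆ S) (hC : C ⊆ S)
    (hAB : Disjoint A B) (hAC : Disjoint A C) (hBC : Disjoint B C) :
    A.ncard + B.ncard + C.ncard ≤ S.ncard := by
  have h1 : Disjoint (A ∪ B) C := Set.disjoint_union_left.mpr ⟨hAC, hBC⟩
  rw [← Set.ncard_union_eq hAB (hS.subset hA) (hS.subset hB)]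
  rw [← Set.ncard_union_eq h1 ((hS.subset hA).union (hS.subset hB)) (hS.subset hC)]
  exact Set.ncard_le_ncard (Set.union_subset (Set.union_subset hA hB) hC) hS

lemma pieces_four {A B C D S : Set α} (hS : S.Finite) (hA : A ⊆ S) (hB : B ⊆ S) (hC : C ⊆ S)
    (hD : D ⊆ S) (hAB : Disjoint A B) (hAC : Disjoint A C) (hBC : Disjoint B C)
    (hAD : Disjoint A D) (hBD : Disjoint B D) (hCD : Disjoint C D) :
    A.ncard + B.ncard + C.ncard + D.ncard ≤ S.ncard := by
  have h1 : Disjoint (A ∪ B) C := Set.disjoint_union_left.mpr ⟨hAC, hBC⟩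
  have h2 : Disjoint (A ∪ B ∪ C) D :=
    Set.disjoint_union_left.mpr ⟨Set.disjoint_union_left.mpr ⟨hAD, hBD⟩, hCD⟩
  rw [← Set.ncard_union_eq hAB (hS.subset hA) (hS.subset hB)]
  rw [← Set.ncard_union_eq h1 ((hS.subset hA).union (hS.subset hB)) (hS.subset hC)]
  rw [← Set.ncard_union_eq h2 (((hS.subset hA).union (hS.subset hB)).union (hS.subset hC))
    (hS.subset hD)]
  exact Set.ncard_le_ncard
    (Set.union_subset (Set.union_subset (Set.union_subset hA hB) hC) hD) hS

end counting

section steps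
open Equiv Fin

/-- the `C` statement: neighbourhood bound for nonempty sets -/
def Cstmt (N : ℕ) : Prop :=
  ∀ S : Set (Equiv.Perm (Fin N)), 1 ≤ S.ncard → S.ncard ≤ 8 * N - 22 →
    2 * N - 3 ≤ (setNbhd (splitStar N) S).ncard

/-- the `P` statement: neighbourhood bound for sets with at least two elements -/
def Pstmt (N : ℕ) : Prop :=
  ∀ S : Set (Equiv.Perm (Fin N)), 2 ≤ S.ncard → S.ncard ≤ 8 * N - 22 →
    4 * N - 9 ≤ (setNbhd (splitStar N) S).ncard

variable {N : ℕ}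

lemma crossSet_subset_setNbhd (hN3 : 3 ≤ N) {U T : Set (Equiv.Perm (Fin (N + 1)))}
    {v : Fin (N + 1)} (hTU : T ⊆ U) (hTv : T ⊆ copySet v) (hUv : U ⊆ copySet v) :
    crossSet hN3 T ⊆ setNbhd (splitStar (N + 1)) U := by
  intro w hw
  have hw1 : w ∉ copySet v := crossSet_disjoint_copy hN3 hTv w hw
  obtain ⟨u, hu, hadj⟩ := crossSet_adj hN3 w hw
  exact ⟨fun hmem => hw1 (hUv hmem), u, hTU hu, hadj⟩

lemma copyNbhd_ge_of_C (hN3 : 3 ≤ N) (hC : Cstmt N) {U : Set (Equiv.Perm (Fin (N + 1)))}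
    {v : Fin (N + 1)} (h1 : 1 ≤ (U ∩ copySet v).ncard)
    (h2 : (U ∩ copySet v).ncard ≤ 8 * N - 22) :
    2 * N - 3 ≤ (copyNbhd v U).ncard := by
  refine le_trans (hC _ ?_ ?_) (copyNbhd_ncard_ge hN3 v U) <;>
    rw [preimage_ncard] <;> omega

lemma copyNbhd_ge_of_P (hN3 : 3 ≤ N) (hP : Pstmt N) {U : Set (Equiv.Perm (Fin (N + 1)))}
    {v : Fin (N + 1)} (h1 : 2 ≤ (U ∩ copySet v).ncard)
    (h2 : (U ∩ copySet v).ncard ≤ 8 * N - 22) :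
    4 * N - 9 ≤ (copyNbhd v U).ncard := by
  refine le_trans (hP _ ?_ ?_) (copyNbhd_ncard_ge hN3 v U) <;>
    rw [preimage_ncard] <;> omega

/-- the cross neighbours of the part of `U` in copy `v`, away from `U`,
give at least `3 * s - |U|` neighbours. -/
lemma cross_minus_bound (hN3 : 3 ≤ N) (U : Set (Equiv.Perm (Fin (N + 1)))) (v : Fin (N + 1)) :
    2 * (U ∩ copySet v).ncard - (U.ncard - (U ∩ copySet v).ncard)
      ≤ ((crossSet hN3 (U ∩ copySet v)) \ U).ncard ∧
    (crossSet hN3 (U ∩ copySet v)) \ U ⊆ setNbhd (splitStar (N + 1)) U := by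
  set T := U ∩ copySet v with hT
  set A := crossSet hN3 T with hA
  have hTv : T ⊆ copySet v := Set.inter_subset_right
  have hAcard : A.ncard = 2 * T.ncard := crossSet_ncard hN3 hTv
  have hsub1 : A ∩ U ⊆ U \ T := by
    rintro x ⟨hxA, hxU⟩
    exact ⟨hxU, fun hxT => crossSet_disjoint_copy hN3 hTv x hxA (hTv hxT)⟩
  have h1 : (A \ U).ncard = A.ncard - (A ∩ U).ncard := by
    rw [← Set.diff_self_inter, Set.ncard_diff Set.inter_subset_left (Set.toFinite _)]
  have h2 : (A ∩ U).ncard ≤ (U \ T).ncard := Set.ncard_le_ncard hsub1 (Set.toFinite _)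
  have h3 : (U \ T).ncard = U.ncard - T.ncard :=
    Set.ncard_diff Set.inter_subset_left (Set.toFinite _)
  constructor
  · omega
  · rintro w ⟨hwA, hwU⟩
    obtain ⟨u, hu, hadj⟩ := crossSet_adj hN3 w hwA
    exact ⟨hwU, u, hu.1, hadj⟩

lemma part_le_card (U : Set (Equiv.Perm (Fin (N + 1)))) (v : Fin (N + 1)) :
    (U ∩ copySet v).ncard ≤ U.ncard :=
  Set.ncard_le_ncard Set.inter_subset_left (Set.toFinite _)

/-- one extra cross neighbour outside two given copies -/
lemma extra_vertex (hN3 : 3 ≤ N) {U : Set (Equiv.Perm (Fin (N + 1)))} {v j : Fin (N + 1)}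
    {u : Equiv.Perm (Fin (N + 1))} (hu : u ∈ U) (huv : u ∈ copySet v)
    (hU2 : U ⊆ copySet v ∪ copySet j) :
    ∃ w, w ∈ setNbhd (splitStar (N + 1)) U ∧ w ∉ copySet v ∧ w ∉ copySet j := by
  by_cases hj : u * clg hN3 ∈ copySet j
  · refine ⟨u * (clg hN3)⁻¹, ⟨?_, u, hu, ?_⟩, cross2_ne_copy hN3 huv, ?_⟩
    · intro hmem
      rcases hU2 hmem with hc | hc
      · exact cross2_ne_copy hN3 huv hc
      · -- u * clg⁻¹ ∈ copySet j and u * clg ∈ copySet j : both last values = j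
        have e1 : u (i1 (by omega : 3 ≤ N + 1)) = j := by
          rw [← cross2_last hN3 u]; exact hc
        have e2 : u (i0 (by omega : 3 ≤ N + 1)) = j := by
          rw [← cross1_last hN3 u]; exact hj
        exact i0_ne_i1 _ (u.injective (e2.trans e1.symm))
    · exact (splitStar_adj_iff (by omega : 3 ≤ N + 1)).mpr ⟨(clg hN3)⁻¹, isGen_clg_inv hN3, rfl⟩
    · intro hc
      have e1 : u (i1 (by omega : 3 ≤ N + 1)) = j := by
        rw [← cross2_last hN3 u]; exact hc
      have e2 : u (i0 (by omega : 3 ≤ N + 1)) = j := by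
        rw [← cross1_last hN3 u]; exact hj
      exact i0_ne_i1 _ (u.injective (e2.trans e1.symm))
  · refine ⟨u * clg hN3, ⟨?_, u, hu, ?_⟩, cross1_ne_copy hN3 huv, hj⟩
    · intro hmem
      rcases hU2 hmem with hc | hc
      · exact cross1_ne_copy hN3 huv hc
      · exact hj hc
    · exact (splitStar_adj_iff (by omega : 3 ≤ N + 1)).mpr ⟨clg hN3, isGen_clg hN3, rfl⟩

lemma setNbhd_finite {V : Type*} [Finite V] (G : SimpleGraph V) (U : Set V) :
    (setNbhd G U).Finite := Set.toFinite _

lemma Cstep (hN : 4 ≤ N) (ih : Cstmt N) : Cstmt (N + 1) := by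
  intro U h1 h2
  have hN3 : 3 ≤ N := by omega
  by_cases hsingle : ∃ v, U ⊆ copySet v
  · obtain ⟨v, hv⟩ := hsingle
    have hUv : U ∩ copySet v = U := Set.inter_eq_self_of_subset_left hv
    obtain ⟨u, hu⟩ : U.Nonempty := (Set.ncard_pos (Set.toFinite _)).mp (by omega)
    by_cases hsize : U.ncard ≤ 8 * N - 22
    · -- within-copy bound plus two cross neighbours of u
      have hA : 2 * N - 3 ≤ (copyNbhd v U).ncard :=
        copyNbhd_ge_of_C hN3 ih (by rw [hUv]; omega) (by rw [hUv]; omega)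
      have hBcard : (crossSet hN3 {u}).ncard = 2 := by
        rw [crossSet_ncard hN3 (by simpa using hv hu), Set.ncard_singleton]
      have hBsub : crossSet hN3 {u} ⊆ setNbhd (splitStar (N + 1)) U :=
        crossSet_subset_setNbhd hN3 (by simpa using hu) (by simpa using hv hu) hv
      have hdisj : Disjoint (copyNbhd v U) (crossSet hN3 {u}) := by
        rw [Set.disjoint_left]
        intro x hx hx'
        exact crossSet_disjoint_copy hN3 (by simpa using hv hu) x hx' (hx.1)
      have := pieces_two (Set.toFinite _) (copyNbhd_subset_setNbhd v U) hBsub hdisj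
      omega
    · -- all cross neighbours
      have hBcard : (crossSet hN3 U).ncard = 2 * U.ncard := crossSet_ncard hN3 hv
      have hBsub : crossSet hN3 U ⊆ setNbhd (splitStar (N + 1)) U :=
        crossSet_subset_setNbhd hN3 (le_refl U) hv hv
      have := Set.ncard_le_ncard hBsub (Set.toFinite _)
      omega
  · -- U meets at least two copies
    obtain ⟨vm, _, hvm⟩ := Finset.exists_max_image Finset.univ
      (fun v : Fin (N + 1) => (U ∩ copySet v).ncard) ⟨0, Finset.mem_univ 0⟩
    obtain ⟨u0, hu0⟩ : U.Nonempty := (Set.ncard_pos (Set.toFinite _)).mp (by omega)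
    have hm1 : 1 ≤ (U ∩ copySet vm).ncard := by
      have h01 : 1 ≤ (U ∩ copySet (u0 (Fin.last N))).ncard := by
        rw [Nat.one_le_iff_ne_zero, Ne, Set.ncard_eq_zero (Set.toFinite _)]
        intro hempty
        rw [Set.eq_empty_iff_forall_notMem] at hempty
        exact hempty u0 ⟨hu0, rfl⟩
      exact le_trans h01 (hvm _ (Finset.mem_univ _))
    obtain ⟨u', hu', hu'v⟩ : ∃ u' ∈ U, u' ∉ copySet vm := by
      by_contra hcon
      push_neg at hcon
      exact hsingle ⟨vm, hcon⟩
    set j := u' (Fin.last N) with hj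
    have hjne : j ≠ vm := hu'v
    have hj1 : 1 ≤ (U ∩ copySet j).ncard := by
      rw [Nat.one_le_iff_ne_zero, Ne, Set.ncard_eq_zero (Set.toFinite _)]
      intro hempty
      rw [Set.eq_empty_iff_forall_notMem] at hempty
      exact hempty u' ⟨hu', rfl⟩
    by_cases hbig : (U ∩ copySet vm).ncard ≤ 8 * N - 22
    · -- two within-copy pieces
      have hA : 2 * N - 3 ≤ (copyNbhd vm U).ncard := copyNbhd_ge_of_C hN3 ih hm1 hbig
      have hB : 2 * N - 3 ≤ (copyNbhd j U).ncard :=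
        copyNbhd_ge_of_C hN3 ih hj1 (le_trans (hvm _ (Finset.mem_univ _)) hbig)
      have hdisj : Disjoint (copyNbhd vm U) (copyNbhd j U) :=
        Set.disjoint_of_subset (copyNbhd_subset_copy _ _) (copyNbhd_subset_copy _ _)
          (copySet_disjoint hjne.symm)
      have := pieces_two (Set.toFinite _) (copyNbhd_subset_setNbhd vm U)
        (copyNbhd_subset_setNbhd j U) hdisj
      omega
    · -- the big part's cross neighbours suffice
      obtain ⟨hbound, hsub⟩ := cross_minus_bound hN3 U vm
      have := Set.ncard_le_ncard hsub (Set.toFinite _)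
      have hple := part_le_card U vm
      omega

lemma Pstep (hN : 4 ≤ N) (ihC : Cstmt N) (ihP : Pstmt N) : Pstmt (N + 1) := by
  intro U h1 h2
  have hN3 : 3 ≤ N := by omega
  by_cases hsingle : ∃ v, U ⊆ copySet v
  · obtain ⟨v, hv⟩ := hsingle
    have hUv : U ∩ copySet v = U := Set.inter_eq_self_of_subset_left hv
    obtain ⟨u1, u2, hu1, hu2, hne⟩ :=
      (Set.one_lt_ncard_iff (Set.toFinite _)).mp (by omega : 1 < U.ncard)
    by_cases hsize : U.ncard ≤ 8 * N - 22
    · -- within-copy bound plus four cross neighbours of u1, u2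
      have hA : 4 * N - 9 ≤ (copyNbhd v U).ncard :=
        copyNbhd_ge_of_P hN3 ihP (by rw [hUv]; omega) (by rw [hUv]; omega)
      have hpair : ({u1, u2} : Set (Equiv.Perm (Fin (N + 1)))) ⊆ copySet v := by
        intro x hx
        rcases hx with rfl | rfl
        · exact hv hu1
        · exact hv hu2
      have hpairU : ({u1, u2} : Set (Equiv.Perm (Fin (N + 1)))) ⊆ U := by
        intro x hx
        rcases hx with rfl | rfl
        · exact hu1
        · exact hu2
      have hBcard : (crossSet hN3 {u1, u2}).ncard = 4 := by
        rw [crossSet_ncard hN3 hpair, Set.ncard_pair hne]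
      have hBsub : crossSet hN3 {u1, u2} ⊆ setNbhd (splitStar (N + 1)) U :=
        crossSet_subset_setNbhd hN3 hpairU hpair hv
      have hdisj : Disjoint (copyNbhd v U) (crossSet hN3 {u1, u2}) := by
        rw [Set.disjoint_left]
        intro x hx hx'
        exact crossSet_disjoint_copy hN3 hpair x hx' (hx.1)
      have := pieces_two (Set.toFinite _) (copyNbhd_subset_setNbhd v U) hBsub hdisj
      omega
    · -- all cross neighbours
      have hBcard : (crossSet hN3 U).ncard = 2 * U.ncard := crossSet_ncard hN3 hv
      have hBsub : crossSet hN3 U ⊆ setNbhd (splitStar (N + 1)) U :=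
        crossSet_subset_setNbhd hN3 (le_refl U) hv hv
      have := Set.ncard_le_ncard hBsub (Set.toFinite _)
      omega
  · -- U meets at least two copies
    obtain ⟨vm, _, hvm⟩ := Finset.exists_max_image Finset.univ
      (fun v : Fin (N + 1) => (U ∩ copySet v).ncard) ⟨0, Finset.mem_univ 0⟩
    obtain ⟨u0, hu0⟩ : U.Nonempty := (Set.ncard_pos (Set.toFinite _)).mp (by omega)
    have hpart1 : ∀ u ∈ U, 1 ≤ (U ∩ copySet (u (Fin.last N))).ncard := by
      intro u hu
      rw [Nat.one_le_iff_ne_zero, Ne, Set.ncard_eq_zero (Set.toFinite _)]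
      intro hempty
      rw [Set.eq_empty_iff_forall_notMem] at hempty
      exact hempty u ⟨hu, rfl⟩
    have hm1 : 1 ≤ (U ∩ copySet vm).ncard :=
      le_trans (hpart1 u0 hu0) (hvm _ (Finset.mem_univ _))
    obtain ⟨u', hu', hu'v⟩ : ∃ u' ∈ U, u' ∉ copySet vm := by
      by_contra hcon
      push_neg at hcon
      exact hsingle ⟨vm, hcon⟩
    set j := u' (Fin.last N) with hj
    have hjne : j ≠ vm := hu'v
    have hj1 : 1 ≤ (U ∩ copySet j).ncard := hpart1 u' hu'
    have hdisjmj : Disjoint (copyNbhd vm U) (copyNbhd j U) :=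
      Set.disjoint_of_subset (copyNbhd_subset_copy _ _) (copyNbhd_subset_copy _ _)
        (copySet_disjoint hjne.symm)
    by_cases hbig : (U ∩ copySet vm).ncard ≤ 8 * N - 22
    · by_cases htwo : 2 ≤ (U ∩ copySet vm).ncard
      · -- P-bound on the max part, C-bound on a second part
        have hA : 4 * N - 9 ≤ (copyNbhd vm U).ncard := copyNbhd_ge_of_P hN3 ihP htwo hbig
        have hB : 2 * N - 3 ≤ (copyNbhd j U).ncard :=
          copyNbhd_ge_of_C hN3 ihC hj1 (le_trans (hvm _ (Finset.mem_univ _)) hbig)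
        have := pieces_two (Set.toFinite _) (copyNbhd_subset_setNbhd vm U)
          (copyNbhd_subset_setNbhd j U) hdisjmj
        omega
      · -- every part is a singleton
        have hA : 2 * N - 3 ≤ (copyNbhd vm U).ncard := copyNbhd_ge_of_C hN3 ihC hm1 hbig
        have hB : 2 * N - 3 ≤ (copyNbhd j U).ncard :=
          copyNbhd_ge_of_C hN3 ihC hj1 (le_trans (hvm _ (Finset.mem_univ _)) hbig)
        by_cases hthird : ∃ u'' ∈ U, u'' ∉ copySet vm ∪ copySet j
        · -- a third copy contributes
          obtain ⟨u'', hu'', hu''v⟩ := hthird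
          set k := u'' (Fin.last N) with hk
          have hknem : k ≠ vm := fun h => hu''v (Or.inl h)
          have hknej : k ≠ j := fun h => hu''v (Or.inr h)
          have hk1 : 1 ≤ (U ∩ copySet k).ncard := hpart1 u'' hu''
          have hC : 2 * N - 3 ≤ (copyNbhd k U).ncard :=
            copyNbhd_ge_of_C hN3 ihC hk1 (le_trans (hvm _ (Finset.mem_univ _)) hbig)
          have hdisjmk : Disjoint (copyNbhd vm U) (copyNbhd k U) :=
            Set.disjoint_of_subset (copyNbhd_subset_copy _ _) (copyNbhd_subset_copy _ _)
              (copySet_disjoint hknem.symm)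
          have hdisjjk : Disjoint (copyNbhd j U) (copyNbhd k U) :=
            Set.disjoint_of_subset (copyNbhd_subset_copy _ _) (copyNbhd_subset_copy _ _)
              (copySet_disjoint hknej.symm)
          have := pieces_three (Set.toFinite _) (copyNbhd_subset_setNbhd vm U)
            (copyNbhd_subset_setNbhd j U) (copyNbhd_subset_setNbhd k U) hdisjmj hdisjmk hdisjjk
          omega
        · -- exactly two copies meet `U`: use one extra cross neighbour
          push_neg at hthird
          obtain ⟨um, humU, humv⟩ : ∃ um ∈ U, um ∈ copySet vm := by
            obtain ⟨x, hx⟩ := (Set.ncard_pos (Set.toFinite _)).mp (by omega :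
              0 < (U ∩ copySet vm).ncard)
            exact ⟨x, hx.1, hx.2⟩
          obtain ⟨w, hwN, hwv, hwj⟩ := extra_vertex hN3 humU humv hthird
          have hdisjW1 : Disjoint (copyNbhd vm U) {w} := by
            rw [Set.disjoint_right]
            rintro x rfl hx
            exact hwv (hx.1)
          have hdisjW2 : Disjoint (copyNbhd j U) {w} := by
            rw [Set.disjoint_right]
            rintro x rfl hx
            exact hwj (hx.1)
          have := pieces_three (Set.toFinite _) (copyNbhd_subset_setNbhd vm U)
            (copyNbhd_subset_setNbhd j U) (Set.singleton_subset_iff.mpr hwN) hdisjmj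
            hdisjW1 hdisjW2
          rw [Set.ncard_singleton] at this
          omega
    · -- the big part's cross neighbours suffice
      obtain ⟨hbound, hsub⟩ := cross_minus_bound hN3 U vm
      have := Set.ncard_le_ncard hsub (Set.toFinite _)
      have hple := part_le_card U vm
      omega

end steps

section base3
open Equiv

instance splitStarAdjDecidable (n : ℕ) : DecidableRel (splitStar n).Adj := fun p q =>
  decidable_of_iff _ (SimpleGraph.fromRel_adj _ p q).symm

set_option maxRecDepth 10000 in
lemma base3W_fin : ∀ S : Finset (Equiv.Perm (Fin 3)), S.Nonempty →
    min 3 (6 - S.card) ≤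
      (Finset.univ.filter
        (fun w => w ∉ S ∧ ∃ u ∈ S, (splitStar 3).Adj u w)).card := by
  decide

end base3

section base3set
open Equiv

lemma base3W (S : Set (Equiv.Perm (Fin 3))) (h : S.Nonempty) :
    min 3 (6 - S.ncard) ≤ (setNbhd (splitStar 3) S).ncard := by
  classical
  have hfin : S.Finite := Set.toFinite _
  have hNfin : (setNbhd (splitStar 3) S).Finite := Set.toFinite _
  rw [Set.ncard_eq_toFinset_card _ hfin, Set.ncard_eq_toFinset_card _ hNfin]
  have heq : hNfin.toFinset = Finset.univ.filter
      (fun w => w ∉ hfin.toFinset ∧ ∃ u ∈ hfin.toFinset, (splitStar 3).Adj u w) := by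
    ext w
    simp only [Set.Finite.mem_toFinset, Finset.mem_filter, Finset.mem_univ, true_and]
    rfl
  rw [heq]
  refine base3W_fin hfin.toFinset ?_
  obtain ⟨x, hx⟩ := h
  exact ⟨x, hfin.mem_toFinset.mpr hx⟩

/-- within-copy neighbourhood bound coming from the 6-vertex graph `S_3^2` -/
lemma copyNbhd_ge_base3 (U : Set (Equiv.Perm (Fin (3 + 1)))) (v : Fin (3 + 1))
    (h1 : 1 ≤ (U ∩ copySet v).ncard) :
    min 3 (6 - (U ∩ copySet v).ncard) ≤ (copyNbhd v U).ncard := by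
  refine le_trans ?_ (copyNbhd_ncard_ge (le_refl 3) v U)
  have hpre := preimage_ncard v U
  have hne : ((liftPerm v) ⁻¹' U).Nonempty := by
    rw [← Set.ncard_pos (Set.toFinite _)] at *
    omega
  have := base3W ((liftPerm v) ⁻¹' U) hne
  rw [hpre] at this
  exact this

set_option maxRecDepth 10000 in
lemma bad_count_fin : ∀ v e : Fin (3 + 1), v ≠ e →
    (Finset.univ.filter (fun u : Equiv.Perm (Fin (3 + 1)) =>
      u (Fin.last 3) = v ∧ u (i0 (by omega : 3 ≤ 3 + 1)) ≠ e ∧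
        u (i1 (by omega : 3 ≤ 3 + 1)) ≠ e)).card = 2 := by
  decide

lemma bad_count (v e : Fin (3 + 1)) (hne : v ≠ e) :
    ({u : Equiv.Perm (Fin (3 + 1)) | u (Fin.last 3) = v ∧
      u (i0 (by omega : 3 ≤ 3 + 1)) ≠ e ∧ u (i1 (by omega : 3 ≤ 3 + 1)) ≠ e}).ncard = 2 := by
  classical
  set B := {u : Equiv.Perm (Fin (3 + 1)) | u (Fin.last 3) = v ∧
      u (i0 (by omega : 3 ≤ 3 + 1)) ≠ e ∧ u (i1 (by omega : 3 ≤ 3 + 1)) ≠ e} with hB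
  have hfin : B.Finite := Set.toFinite _
  rw [Set.ncard_eq_toFinset_card _ hfin]
  have heq : hfin.toFinset = Finset.univ.filter (fun u : Equiv.Perm (Fin (3 + 1)) =>
      u (Fin.last 3) = v ∧ u (i0 (by omega : 3 ≤ 3 + 1)) ≠ e ∧
        u (i1 (by omega : 3 ≤ 3 + 1)) ≠ e) := by
    ext u
    simp [hB, Set.Finite.mem_toFinset]
  rw [heq]
  exact bad_count_fin v e hne

/-- endpoints in the copy `e` of cross edges leaving `T` -/
def endSet (e : Fin (3 + 1)) (T : Set (Equiv.Perm (Fin (3 + 1)))) :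
    Set (Equiv.Perm (Fin (3 + 1))) :=
  {w | w ∈ copySet e ∧ ∃ u ∈ T, (splitStar (3 + 1)).Adj u w}

lemma endSet_bound {v e : Fin (3 + 1)} (hne : v ≠ e) {T : Set (Equiv.Perm (Fin (3 + 1)))}
    (hT : T ⊆ copySet v) : T.ncard ≤ (endSet e T).ncard + 2 := by
  classical
  have h3 : (3 : ℕ) ≤ 3 := le_refl 3
  set D := T ∩ {u | u (i0 (by omega : 3 ≤ 3 + 1)) = e ∨ u (i1 (by omega : 3 ≤ 3 + 1)) = e}
    with hD
  set φ : Equiv.Perm (Fin (3 + 1)) → Equiv.Perm (Fin (3 + 1)) :=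
    fun u => if u (i0 (by omega : 3 ≤ 3 + 1)) = e then u * clg h3 else u * (clg h3)⁻¹ with hφ
  have himg : φ '' D ⊆ endSet e T := by
    rintro w ⟨u, ⟨huT, hcond⟩, rfl⟩
    by_cases hc : u (i0 (by omega : 3 ≤ 3 + 1)) = e
    · refine ⟨?_, u, huT, ?_⟩
      · show (φ u) (Fin.last 3) = e
        rw [hφ]
        simp only [hc, if_pos]
        rw [cross1_last h3 u]
        exact hc
      · rw [hφ]
        simp only [hc, if_pos]
        exact (splitStar_adj_iff (by omega : 3 ≤ 3 + 1)).mpr ⟨clg h3, isGen_clg h3, rfl⟩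
    · have hc2 : u (i1 (by omega : 3 ≤ 3 + 1)) = e := by
        rcases hcond with h | h
        · exact absurd h hc
        · exact h
      refine ⟨?_, u, huT, ?_⟩
      · show (φ u) (Fin.last 3) = e
        rw [hφ]
        simp only [hc, if_neg, if_false]
        rw [cross2_last h3 u]
        exact hc2
      · rw [hφ]
        simp only [hc, if_neg, if_false]
        exact (splitStar_adj_iff (by omega : 3 ≤ 3 + 1)).mpr
          ⟨(clg h3)⁻¹, isGen_clg_inv h3, rfl⟩
  have hInj : Set.InjOn φ D := by
    rintro u ⟨huT, _⟩ u' ⟨hu'T, _⟩ heq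
    rw [hφ] at heq
    by_cases hc : u (i0 (by omega : 3 ≤ 3 + 1)) = e <;>
      by_cases hc' : u' (i0 (by omega : 3 ≤ 3 + 1)) = e
    · simp only [hc, hc', if_pos] at heq
      exact mul_right_cancel heq
    · simp only [hc, hc', if_pos, if_neg, if_false] at heq
      exact absurd heq (cross_mixed_ne h3 (hT huT) (hT hu'T))
    · simp only [hc, hc', if_pos, if_neg, if_false] at heq
      exact absurd heq.symm (cross_mixed_ne h3 (hT hu'T) (hT huT))
    · simp only [hc, hc', if_neg, if_false] at heq
      exact mul_right_cancel heq
  have hDcard : D.ncard ≤ (endSet e T).ncard := by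
    rw [← Set.ncard_image_of_injOn hInj]
    exact Set.ncard_le_ncard himg (Set.toFinite _)
  have hTD : T \ D ⊆ {u : Equiv.Perm (Fin (3 + 1)) | u (Fin.last 3) = v ∧
      u (i0 (by omega : 3 ≤ 3 + 1)) ≠ e ∧ u (i1 (by omega : 3 ≤ 3 + 1)) ≠ e} := by
    rintro u ⟨huT, huD⟩
    refine ⟨hT huT, ?_, ?_⟩
    · intro h
      exact huD ⟨huT, Or.inl h⟩
    · intro h
      exact huD ⟨huT, Or.inr h⟩
  have hTDcard : (T \ D).ncard ≤ 2 := by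
    rw [← bad_count v e hne]
    exact Set.ncard_le_ncard hTD (Set.toFinite _)
  have hsplit : T.ncard ≤ D.ncard + (T \ D).ncard := by
    refine le_trans (Set.ncard_le_ncard ?_ (Set.toFinite _)) (Set.ncard_union_le _ _)
    intro x hx
    by_cases hxD : x ∈ D
    · exact Or.inl hxD
    · exact Or.inr ⟨hx, hxD⟩
  omega

lemma endSet_subset_copy (e : Fin (3 + 1)) (T : Set (Equiv.Perm (Fin (3 + 1)))) :
    endSet e T ⊆ copySet e := fun _ hw => hw.1

lemma endSet_subset_setNbhd {e : Fin (3 + 1)} {U T : Set (Equiv.Perm (Fin (3 + 1)))}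
    (hTU : T ⊆ U) (hempty : U ∩ copySet e = ∅) :
    endSet e T ⊆ setNbhd (splitStar (3 + 1)) U := by
  rintro w ⟨hwc, u, huT, hadj⟩
  refine ⟨?_, u, hTU huT, hadj⟩
  intro hwU
  rw [Set.eq_empty_iff_forall_notMem] at hempty
  exact hempty w ⟨hwU, hwc⟩

end base3set

section fourcopies
open Equiv

lemma four_copies (U : Set (Equiv.Perm (Fin (3 + 1)))) (hU : U.Nonempty)
    (hmulti : ¬ ∃ v, U ⊆ copySet v) :
    ∃ vm j e1 e2 : Fin (3 + 1),
      vm ≠ j ∧ vm ≠ e1 ∧ vm ≠ e2 ∧ j ≠ e1 ∧ j ≠ e2 ∧ e1 ≠ e2 ∧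
      (∀ x : Fin (3 + 1), x = vm ∨ x = j ∨ x = e1 ∨ x = e2) ∧
      1 ≤ (U ∩ copySet vm).ncard ∧ 1 ≤ (U ∩ copySet j).ncard ∧
      (∀ v, (U ∩ copySet v).ncard ≤ (U ∩ copySet vm).ncard) ∧
      (∀ v, v ≠ vm → (U ∩ copySet v).ncard ≤ (U ∩ copySet j).ncard) := by
  classical
  set f : Fin (3 + 1) → ℕ := fun v => (U ∩ copySet v).ncard with hf
  have hpart1 : ∀ u ∈ U, 1 ≤ f (u (Fin.last 3)) := by
    intro u hu
    rw [hf]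
    simp only
    rw [Nat.one_le_iff_ne_zero, Ne, Set.ncard_eq_zero (Set.toFinite _)]
    intro hempty
    rw [Set.eq_empty_iff_forall_notMem] at hempty
    exact hempty u ⟨hu, rfl⟩
  obtain ⟨vm, _, hvm⟩ := Finset.exists_max_image Finset.univ f ⟨0, Finset.mem_univ 0⟩
  obtain ⟨u0, hu0⟩ := hU
  have hm1 : 1 ≤ f vm := le_trans (hpart1 u0 hu0) (hvm _ (Finset.mem_univ _))
  have herase_ne : (Finset.univ.erase vm).Nonempty := by
    rw [← Finset.card_pos, Finset.card_erase_of_mem (Finset.mem_univ vm)]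
    simp
  obtain ⟨j, hjmem, hj⟩ := Finset.exists_max_image (Finset.univ.erase vm) f herase_ne
  have hjvm : j ≠ vm := Finset.ne_of_mem_erase hjmem
  obtain ⟨u', hu', hu'v⟩ : ∃ u' ∈ U, u' ∉ copySet vm := by
    by_contra hcon
    push_neg at hcon
    exact hmulti ⟨vm, hcon⟩
  have hj1 : 1 ≤ f j := by
    refine le_trans (hpart1 u' hu') (hj _ ?_)
    exact Finset.mem_erase.mpr ⟨hu'v, Finset.mem_univ _⟩
  have hcard2 : ((Finset.univ.erase vm).erase j).card = 2 := by
    rw [Finset.card_erase_of_mem (Finset.mem_erase.mpr ⟨hjvm, Finset.mem_univ _⟩),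
      Finset.card_erase_of_mem (Finset.mem_univ vm)]
    simp
  obtain ⟨e1, e2, he12, hee⟩ := Finset.card_eq_two.mp hcard2
  have he1mem : e1 ∈ (Finset.univ.erase vm).erase j := by rw [hee]; simp
  have he2mem : e2 ∈ (Finset.univ.erase vm).erase j := by rw [hee]; simp
  have he1j : e1 ≠ j := (Finset.mem_erase.mp he1mem).1
  have he1vm : e1 ≠ vm := (Finset.mem_erase.mp (Finset.mem_erase.mp he1mem).2).1
  have he2j : e2 ≠ j := (Finset.mem_erase.mp he2mem).1
  have he2vm : e2 ≠ vm := (Finset.mem_erase.mp (Finset.mem_erase.mp he2mem).2).1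
  refine ⟨vm, j, e1, e2, hjvm.symm, he1vm.symm, he2vm.symm, he1j.symm, he2j.symm, he12, ?_,
    hm1, hj1, fun v => hvm v (Finset.mem_univ v), fun v hv => hj v
      (Finset.mem_erase.mpr ⟨hv, Finset.mem_univ _⟩)⟩
  intro x
  by_cases h1 : x = vm
  · exact Or.inl h1
  by_cases h2 : x = j
  · exact Or.inr (Or.inl h2)
  have : x ∈ (Finset.univ.erase vm).erase j :=
    Finset.mem_erase.mpr ⟨h2, Finset.mem_erase.mpr ⟨h1, Finset.mem_univ _⟩⟩
  rw [hee, Finset.mem_insert, Finset.mem_singleton] at this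
  rcases this with h | h
  · exact Or.inr (Or.inr (Or.inl h))
  · exact Or.inr (Or.inr (Or.inr h))

lemma parts_sum_le (U : Set (Equiv.Perm (Fin (3 + 1)))) {a b c d : Fin (3 + 1)}
    (hab : a ≠ b) (hac : a ≠ c) (had : a ≠ d) (hbc : b ≠ c) (hbd : b ≠ d) (hcd : c ≠ d) :
    (U ∩ copySet a).ncard + (U ∩ copySet b).ncard + (U ∩ copySet c).ncard
      + (U ∩ copySet d).ncard ≤ U.ncard := by
  have hdj : ∀ {x y : Fin (3 + 1)}, x ≠ y → Disjoint (U ∩ copySet x) (U ∩ copySet y) :=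
    fun hxy => Set.disjoint_of_subset Set.inter_subset_right Set.inter_subset_right
      (copySet_disjoint hxy)
  exact pieces_four (Set.toFinite _) Set.inter_subset_left Set.inter_subset_left
    Set.inter_subset_left Set.inter_subset_left (hdj hab) (hdj hac) (hdj hbc) (hdj had)
    (hdj hbd) (hdj hcd)

end fourcopies

section bases
open Equiv

lemma disj_copies {N : ℕ} {A B : Set (Equiv.Perm (Fin (N + 1)))} {x y : Fin (N + 1)}
    (hA : A ⊆ copySet x) (hB : B ⊆ copySet y) (h : x ≠ y) : Disjoint A B :=
  Set.disjoint_of_subset hA hB (copySet_disjoint h)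

lemma endSet_piece (U : Set (Equiv.Perm (Fin (3 + 1)))) {vm e : Fin (3 + 1)} (hne : vm ≠ e)
    (hempty : (U ∩ copySet e).ncard = 0) :
    (U ∩ copySet vm).ncard ≤ (endSet e (U ∩ copySet vm)).ncard + 2 ∧
    endSet e (U ∩ copySet vm) ⊆ setNbhd (splitStar (3 + 1)) U ∧
    endSet e (U ∩ copySet vm) ⊆ copySet e :=
  ⟨endSet_bound hne Set.inter_subset_right,
    endSet_subset_setNbhd Set.inter_subset_left
      ((Set.ncard_eq_zero (Set.toFinite _)).mp hempty),
    endSet_subset_copy _ _⟩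

lemma Cbase : Cstmt (3 + 1) := by
  intro U h1 h2
  have h33 : (3:ℕ) ≤ 3 := le_refl 3
  by_cases hsingle : ∃ v, U ⊆ copySet v
  · obtain ⟨v, hv⟩ := hsingle
    have hUv : U ∩ copySet v = U := Set.inter_eq_self_of_subset_left hv
    obtain ⟨u, hu⟩ : U.Nonempty := (Set.ncard_pos (Set.toFinite _)).mp (by omega)
    by_cases hsize : U.ncard ≤ 3
    · have hA : min 3 (6 - (U ∩ copySet v).ncard) ≤ (copyNbhd v U).ncard :=
        copyNbhd_ge_base3 U v (by rw [hUv]; omega)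
      rw [hUv] at hA
      have hBcard : (crossSet h33 {u}).ncard = 2 := by
        rw [crossSet_ncard h33 (by simpa using hv hu), Set.ncard_singleton]
      have hBsub : crossSet h33 {u} ⊆ setNbhd (splitStar (3 + 1)) U :=
        crossSet_subset_setNbhd h33 (by simpa using hu) (by simpa using hv hu) hv
      have hdisj : Disjoint (copyNbhd v U) (crossSet h33 {u}) := by
        rw [Set.disjoint_left]
        intro x hx hx'
        exact crossSet_disjoint_copy h33 (by simpa using hv hu) x hx' (hx.1)
      have := pieces_two (Set.toFinite _) (copyNbhd_subset_setNbhd v U) hBsub hdisj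
      omega
    · have hBcard : (crossSet h33 U).ncard = 2 * U.ncard := crossSet_ncard h33 hv
      have hBsub : crossSet h33 U ⊆ setNbhd (splitStar (3 + 1)) U :=
        crossSet_subset_setNbhd h33 (le_refl U) hv hv
      have := Set.ncard_le_ncard hBsub (Set.toFinite _)
      omega
  · obtain ⟨u0, hu0⟩ : U.Nonempty := (Set.ncard_pos (Set.toFinite _)).mp (by omega)
    obtain ⟨vm, j, e1, e2, hvj, hve1, hve2, hje1, hje2, he12, hall, hm1, hj1, hmax, hmax2⟩ :=
      four_copies U ⟨u0, hu0⟩ hsingle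
    have hsum := parts_sum_le U hvj hve1 hve2 hje1 hje2 he12
    have hWdisj : Disjoint (copyNbhd vm U) (copyNbhd j U) :=
      disj_copies (copyNbhd_subset_copy _ _) (copyNbhd_subset_copy _ _) hvj
    by_cases hfm : (U ∩ copySet vm).ncard ≤ 3
    · -- both largest parts are small
      have hA := copyNbhd_ge_base3 U vm hm1
      have hB := copyNbhd_ge_base3 U j hj1
      have hjle := hmax j
      have := pieces_two (Set.toFinite _) (copyNbhd_subset_setNbhd vm U)
        (copyNbhd_subset_setNbhd j U) hWdisj
      omega
    · by_cases hfj : (U ∩ copySet j).ncard ≤ 3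
      · by_cases he1p : 1 ≤ (U ∩ copySet e1).ncard
        · -- copies j and e1 are small and nonempty
          have hB := copyNbhd_ge_base3 U j hj1
          have hC := copyNbhd_ge_base3 U e1 he1p
          have he1le' := hmax2 e1 (Ne.symm hve1)
          have hd : Disjoint (copyNbhd j U) (copyNbhd e1 U) :=
            disj_copies (copyNbhd_subset_copy _ _) (copyNbhd_subset_copy _ _) hje1
          have := pieces_two (Set.toFinite _) (copyNbhd_subset_setNbhd j U)
            (copyNbhd_subset_setNbhd e1 U) hd
          omega
        · by_cases he2p : 1 ≤ (U ∩ copySet e2).ncard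
          · have hB := copyNbhd_ge_base3 U j hj1
            have hC := copyNbhd_ge_base3 U e2 he2p
            have he2le' := hmax2 e2 (Ne.symm hve2)
            have hd : Disjoint (copyNbhd j U) (copyNbhd e2 U) :=
              disj_copies (copyNbhd_subset_copy _ _) (copyNbhd_subset_copy _ _) hje2
            have := pieces_two (Set.toFinite _) (copyNbhd_subset_setNbhd j U)
              (copyNbhd_subset_setNbhd e2 U) hd
            omega
          · -- copies e1, e2 are empty
            obtain ⟨hEb, hEsub, hEcopy⟩ := endSet_piece U hve1 (by omega)
            have hA := copyNbhd_ge_base3 U vm hm1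
            have hB := copyNbhd_ge_base3 U j hj1
            have hd1 : Disjoint (copyNbhd vm U) (endSet e1 (U ∩ copySet vm)) :=
              disj_copies (copyNbhd_subset_copy _ _) hEcopy hve1
            have hd2 : Disjoint (copyNbhd j U) (endSet e1 (U ∩ copySet vm)) :=
              disj_copies (copyNbhd_subset_copy _ _) hEcopy hje1
            have := pieces_three (Set.toFinite _) (copyNbhd_subset_setNbhd vm U)
              (copyNbhd_subset_setNbhd j U) hEsub hWdisj hd1 hd2
            omega
      · -- two big parts
        by_cases he1p : 1 ≤ (U ∩ copySet e1).ncard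
        · by_cases he2p : 1 ≤ (U ∩ copySet e2).ncard
          · -- both other copies nonempty and tiny
            have hC := copyNbhd_ge_base3 U e1 he1p
            have hD := copyNbhd_ge_base3 U e2 he2p
            have hd : Disjoint (copyNbhd e1 U) (copyNbhd e2 U) :=
              disj_copies (copyNbhd_subset_copy _ _) (copyNbhd_subset_copy _ _) he12
            have := pieces_two (Set.toFinite _) (copyNbhd_subset_setNbhd e1 U)
              (copyNbhd_subset_setNbhd e2 U) hd
            omega
          · obtain ⟨hEb, hEsub, hEcopy⟩ := endSet_piece U hve2 (by omega)
            have hA := copyNbhd_ge_base3 U vm hm1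
            have hB := copyNbhd_ge_base3 U j hj1
            have hC := copyNbhd_ge_base3 U e1 he1p
            have hd1 : Disjoint (copyNbhd vm U) (copyNbhd e1 U) :=
              disj_copies (copyNbhd_subset_copy _ _) (copyNbhd_subset_copy _ _) hve1
            have hd2 : Disjoint (copyNbhd j U) (copyNbhd e1 U) :=
              disj_copies (copyNbhd_subset_copy _ _) (copyNbhd_subset_copy _ _) hje1
            have hd3 : Disjoint (copyNbhd vm U) (endSet e2 (U ∩ copySet vm)) :=
              disj_copies (copyNbhd_subset_copy _ _) hEcopy hve2
            have hd4 : Disjoint (copyNbhd j U) (endSet e2 (U ∩ copySet vm)) :=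
              disj_copies (copyNbhd_subset_copy _ _) hEcopy hje2
            have hd5 : Disjoint (copyNbhd e1 U) (endSet e2 (U ∩ copySet vm)) :=
              disj_copies (copyNbhd_subset_copy _ _) hEcopy he12
            have := pieces_four (Set.toFinite _) (copyNbhd_subset_setNbhd vm U)
              (copyNbhd_subset_setNbhd j U) (copyNbhd_subset_setNbhd e1 U) hEsub
              hWdisj hd1 hd2 hd3 hd4 hd5
            omega
        · -- copy e1 empty
          obtain ⟨hEb, hEsub, hEcopy⟩ := endSet_piece U hve1 (by omega)
          have hA := copyNbhd_ge_base3 U vm hm1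
          have hB := copyNbhd_ge_base3 U j hj1
          have hjle := hmax j
          have hd1 : Disjoint (copyNbhd vm U) (endSet e1 (U ∩ copySet vm)) :=
            disj_copies (copyNbhd_subset_copy _ _) hEcopy hve1
          have hd2 : Disjoint (copyNbhd j U) (endSet e1 (U ∩ copySet vm)) :=
            disj_copies (copyNbhd_subset_copy _ _) hEcopy hje1
          have := pieces_three (Set.toFinite _) (copyNbhd_subset_setNbhd vm U)
            (copyNbhd_subset_setNbhd j U) hEsub hWdisj hd1 hd2
          omega

end bases

section pbase
open Equiv

lemma Pbase : Pstmt (3 + 1) := by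
  intro U h1 h2
  have h33 : (3:ℕ) ≤ 3 := le_refl 3
  by_cases hsingle : ∃ v, U ⊆ copySet v
  · obtain ⟨v, hv⟩ := hsingle
    have hUv : U ∩ copySet v = U := Set.inter_eq_self_of_subset_left hv
    obtain ⟨u1, u2, hu1, hu2, hne⟩ :=
      (Set.one_lt_ncard_iff (Set.toFinite _)).mp (by omega : 1 < U.ncard)
    by_cases hsize : U.ncard ≤ 3
    · have hA : min 3 (6 - (U ∩ copySet v).ncard) ≤ (copyNbhd v U).ncard :=
        copyNbhd_ge_base3 U v (by rw [hUv]; omega)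
      rw [hUv] at hA
      have hpair : ({u1, u2} : Set (Equiv.Perm (Fin (3 + 1)))) ⊆ copySet v := by
        intro x hx
        rcases hx with rfl | rfl
        · exact hv hu1
        · exact hv hu2
      have hpairU : ({u1, u2} : Set (Equiv.Perm (Fin (3 + 1)))) ⊆ U := by
        intro x hx
        rcases hx with rfl | rfl
        · exact hu1
        · exact hu2
      have hBcard : (crossSet h33 {u1, u2}).ncard = 4 := by
        rw [crossSet_ncard h33 hpair, Set.ncard_pair hne]
      have hBsub : crossSet h33 {u1, u2} ⊆ setNbhd (splitStar (3 + 1)) U :=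
        crossSet_subset_setNbhd h33 hpairU hpair hv
      have hdisj : Disjoint (copyNbhd v U) (crossSet h33 {u1, u2}) := by
        rw [Set.disjoint_left]
        intro x hx hx'
        exact crossSet_disjoint_copy h33 hpair x hx' (hx.1)
      have := pieces_two (Set.toFinite _) (copyNbhd_subset_setNbhd v U) hBsub hdisj
      omega
    · have hBcard : (crossSet h33 U).ncard = 2 * U.ncard := crossSet_ncard h33 hv
      have hBsub : crossSet h33 U ⊆ setNbhd (splitStar (3 + 1)) U :=
        crossSet_subset_setNbhd h33 (le_refl U) hv hv
      have := Set.ncard_le_ncard hBsub (Set.toFinite _)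
      omega
  · obtain ⟨u0, hu0⟩ : U.Nonempty := (Set.ncard_pos (Set.toFinite _)).mp (by omega)
    obtain ⟨vm, j, e1, e2, hvj, hve1, hve2, hje1, hje2, he12, hall, hm1, hj1, hmax, hmax2⟩ :=
      four_copies U ⟨u0, hu0⟩ hsingle
    have hsum := parts_sum_le U hvj hve1 hve2 hje1 hje2 he12
    have hWdisj : Disjoint (copyNbhd vm U) (copyNbhd j U) :=
      disj_copies (copyNbhd_subset_copy _ _) (copyNbhd_subset_copy _ _) hvj
    have hA := copyNbhd_ge_base3 U vm hm1
    have hB := copyNbhd_ge_base3 U j hj1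
    have hjle := hmax j
    by_cases he1p : 1 ≤ (U ∩ copySet e1).ncard
    · by_cases he2p : 1 ≤ (U ∩ copySet e2).ncard
      · -- all four copies nonempty
        have hC := copyNbhd_ge_base3 U e1 he1p
        have hD := copyNbhd_ge_base3 U e2 he2p
        have he1le := hmax2 e1 (Ne.symm hve1)
        have he2le := hmax2 e2 (Ne.symm hve2)
        have hd1 : Disjoint (copyNbhd vm U) (copyNbhd e1 U) :=
          disj_copies (copyNbhd_subset_copy _ _) (copyNbhd_subset_copy _ _) hve1
        have hd2 : Disjoint (copyNbhd j U) (copyNbhd e1 U) :=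
          disj_copies (copyNbhd_subset_copy _ _) (copyNbhd_subset_copy _ _) hje1
        have hd3 : Disjoint (copyNbhd vm U) (copyNbhd e2 U) :=
          disj_copies (copyNbhd_subset_copy _ _) (copyNbhd_subset_copy _ _) hve2
        have hd4 : Disjoint (copyNbhd j U) (copyNbhd e2 U) :=
          disj_copies (copyNbhd_subset_copy _ _) (copyNbhd_subset_copy _ _) hje2
        have hd5 : Disjoint (copyNbhd e1 U) (copyNbhd e2 U) :=
          disj_copies (copyNbhd_subset_copy _ _) (copyNbhd_subset_copy _ _) he12
        have := pieces_four (Set.toFinite _) (copyNbhd_subset_setNbhd vm U)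
          (copyNbhd_subset_setNbhd j U) (copyNbhd_subset_setNbhd e1 U)
          (copyNbhd_subset_setNbhd e2 U) hWdisj hd1 hd2 hd3 hd4 hd5
        omega
      · -- e2 empty, e1 nonempty
        obtain ⟨hEb, hEsub, hEcopy⟩ := endSet_piece U hve2 (by omega)
        have hC := copyNbhd_ge_base3 U e1 he1p
        have he1le := hmax2 e1 (Ne.symm hve1)
        have hd1 : Disjoint (copyNbhd vm U) (copyNbhd e1 U) :=
          disj_copies (copyNbhd_subset_copy _ _) (copyNbhd_subset_copy _ _) hve1
        have hd2 : Disjoint (copyNbhd j U) (copyNbhd e1 U) :=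
          disj_copies (copyNbhd_subset_copy _ _) (copyNbhd_subset_copy _ _) hje1
        have hd3 : Disjoint (copyNbhd vm U) (endSet e2 (U ∩ copySet vm)) :=
          disj_copies (copyNbhd_subset_copy _ _) hEcopy hve2
        have hd4 : Disjoint (copyNbhd j U) (endSet e2 (U ∩ copySet vm)) :=
          disj_copies (copyNbhd_subset_copy _ _) hEcopy hje2
        have hd5 : Disjoint (copyNbhd e1 U) (endSet e2 (U ∩ copySet vm)) :=
          disj_copies (copyNbhd_subset_copy _ _) hEcopy he12
        have := pieces_four (Set.toFinite _) (copyNbhd_subset_setNbhd vm U)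
          (copyNbhd_subset_setNbhd j U) (copyNbhd_subset_setNbhd e1 U) hEsub
          hWdisj hd1 hd2 hd3 hd4 hd5
        omega
    · by_cases he2p : 1 ≤ (U ∩ copySet e2).ncard
      · -- e1 empty, e2 nonempty
        obtain ⟨hEb, hEsub, hEcopy⟩ := endSet_piece U hve1 (by omega)
        have hC := copyNbhd_ge_base3 U e2 he2p
        have he2le := hmax2 e2 (Ne.symm hve2)
        have hd1 : Disjoint (copyNbhd vm U) (copyNbhd e2 U) :=
          disj_copies (copyNbhd_subset_copy _ _) (copyNbhd_subset_copy _ _) hve2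
        have hd2 : Disjoint (copyNbhd j U) (copyNbhd e2 U) :=
          disj_copies (copyNbhd_subset_copy _ _) (copyNbhd_subset_copy _ _) hje2
        have hd3 : Disjoint (copyNbhd vm U) (endSet e1 (U ∩ copySet vm)) :=
          disj_copies (copyNbhd_subset_copy _ _) hEcopy hve1
        have hd4 : Disjoint (copyNbhd j U) (endSet e1 (U ∩ copySet vm)) :=
          disj_copies (copyNbhd_subset_copy _ _) hEcopy hje1
        have hd5 : Disjoint (copyNbhd e2 U) (endSet e1 (U ∩ copySet vm)) :=
          disj_copies (copyNbhd_subset_copy _ _) hEcopy (Ne.symm he12)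
        have := pieces_four (Set.toFinite _) (copyNbhd_subset_setNbhd vm U)
          (copyNbhd_subset_setNbhd j U) (copyNbhd_subset_setNbhd e2 U) hEsub
          hWdisj hd1 hd2 hd3 hd4 hd5
        omega
      · -- both e1 and e2 empty: U lives in the copies vm and j
        have he1z : (U ∩ copySet e1).ncard = 0 := by omega
        have he2z : (U ∩ copySet e2).ncard = 0 := by omega
        have hU2 : U ⊆ copySet vm ∪ copySet j := by
          intro x hx
          rcases hall (x (Fin.last 3)) with hc | hc | hc | hc
          · exact Or.inl hc
          · exact Or.inr hc
          · exfalso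
            have : x ∈ U ∩ copySet e1 := ⟨hx, hc⟩
            rw [(Set.ncard_eq_zero (Set.toFinite _)).mp he1z] at this
            exact this
          · exfalso
            have : x ∈ U ∩ copySet e2 := ⟨hx, hc⟩
            rw [(Set.ncard_eq_zero (Set.toFinite _)).mp he2z] at this
            exact this
        by_cases hfm : (U ∩ copySet vm).ncard ≤ 3
        · -- two small parts plus one extra cross vertex
          obtain ⟨um, humU, humv⟩ : ∃ um ∈ U, um ∈ copySet vm := by
            obtain ⟨x, hx⟩ := (Set.ncard_pos (Set.toFinite _)).mp (by omega :
              0 < (U ∩ copySet vm).ncard)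
            exact ⟨x, hx.1, hx.2⟩
          obtain ⟨w, hwN, hwv, hwj⟩ := extra_vertex h33 humU humv hU2
          have hdW1 : Disjoint (copyNbhd vm U) {w} := by
            rw [Set.disjoint_right]
            rintro x rfl hx
            exact hwv (hx.1)
          have hdW2 : Disjoint (copyNbhd j U) {w} := by
            rw [Set.disjoint_right]
            rintro x rfl hx
            exact hwj (hx.1)
          have := pieces_three (Set.toFinite _) (copyNbhd_subset_setNbhd vm U)
            (copyNbhd_subset_setNbhd j U) (Set.singleton_subset_iff.mpr hwN) hWdisj hdW1 hdW2
          rw [Set.ncard_singleton] at this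
          omega
        · -- big max part: use both empty copies as endpoint targets
          obtain ⟨hEb1, hEsub1, hEcopy1⟩ := endSet_piece U hve1 he1z
          obtain ⟨hEb2, hEsub2, hEcopy2⟩ := endSet_piece U hve2 he2z
          have hd1 : Disjoint (copyNbhd vm U) (endSet e1 (U ∩ copySet vm)) :=
            disj_copies (copyNbhd_subset_copy _ _) hEcopy1 hve1
          have hd2 : Disjoint (copyNbhd j U) (endSet e1 (U ∩ copySet vm)) :=
            disj_copies (copyNbhd_subset_copy _ _) hEcopy1 hje1
          have hd3 : Disjoint (copyNbhd vm U) (endSet e2 (U ∩ copySet vm)) :=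
            disj_copies (copyNbhd_subset_copy _ _) hEcopy2 hve2
          have hd4 : Disjoint (copyNbhd j U) (endSet e2 (U ∩ copySet vm)) :=
            disj_copies (copyNbhd_subset_copy _ _) hEcopy2 hje2
          have hd5 : Disjoint (endSet e1 (U ∩ copySet vm)) (endSet e2 (U ∩ copySet vm)) :=
            disj_copies hEcopy1 hEcopy2 he12
          have := pieces_four (Set.toFinite _) (copyNbhd_subset_setNbhd vm U)
            (copyNbhd_subset_setNbhd j U) hEsub1 hEsub2 hWdisj hd1 hd2 hd3 hd4 hd5
          omega

end pbase

lemma CP_all (N : ℕ) (hN : 4 ≤ N) : Cstmt N ∧ Pstmt N := by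
  induction N, hN using Nat.le_induction with
  | base => exact ⟨Cbase, Pbase⟩
  | succ n hn ih => exact ⟨Cstep hn ih.1, Pstep hn ih.1 ih.2⟩


/-- For the split-star network `S_n^2` with `n ≥ 4` and any
`U ⊆ V(S_n^2)` with `2 ≤ |U| ≤ 8n − 22`, one has `|N_{S_n^2}(U)| ≥ 4n − 9`. -/
theorem splitStar_nbhd_bound (n : ℕ) (hn : 4 ≤ n) (U : Set (Equiv.Perm (Fin n)))
    (hU1 : 2 ≤ U.ncard) (hU2 : U.ncard ≤ 8 * n - 22) :
    4 * n - 9 ≤ (setNbhd (splitStar n) U).ncard :=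
  (CP_all n hn).2 U hU1 hU2
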